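/- Let K be a C-pseudo-cone in ℝⁿ. Then the support function h_K is non-positive on the dual cone C° and strictly negative on the interior of C°. -/

import Mathlib

open Set Pointwise RealInnerProductSpace Filter Topology

noncomputable section

/-- The support function of a set `K ⊆ ℝⁿ`, with values in `ℝ ∪ {∞} ⊆ EReal`. -/
def supportFn {n : ℕ} (K : Set (EuclideanSpace ℝ (Fin n))) (u : EuclideanSpace ℝ (Fin n)) :
    EReal :=
  sSup ((fun x => ((⟪u, x⟫ : ℝ) : EReal)) '' K)

/-- The copolar set `K* = {u : ⟨u,x⟩ ≤ -1 for all x ∈ K}`. -/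
def copolar {n : ℕ} (K : Set (EuclideanSpace ℝ (Fin n))) : Set (EuclideanSpace ℝ (Fin n)) :=
  {u | ∀ x ∈ K, ⟪u, x⟫ ≤ (-1 : ℝ)}

/-- The dual cone `C° = {u : ⟨u,x⟩ ≤ 0 for all x ∈ C}`. -/
def dualCone {n : ℕ} (C : Set (EuclideanSpace ℝ (Fin n))) : Set (EuclideanSpace ℝ (Fin n)) :=
  {u | ∀ x ∈ C, ⟪u, x⟫ ≤ (0 : ℝ)}

/-- The recession cone of `K`. -/
def recessionCone {n : ℕ} (K : Set (EuclideanSpace ℝ (Fin n))) :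
    Set (EuclideanSpace ℝ (Fin n)) :=
  {y | ∀ x ∈ K, ∀ t : ℝ, 0 ≤ t → x + t • y ∈ K}

/-- A pseudo-cone: a nonempty closed convex set with `0 ∉ K` and `λK ⊆ K` for `λ ≥ 1`. -/
def IsPseudoCone {n : ℕ} (K : Set (EuclideanSpace ℝ (Fin n))) : Prop :=
  K.Nonempty ∧ IsClosed K ∧ Convex ℝ K ∧ (0 : EuclideanSpace ℝ (Fin n)) ∉ K ∧
    ∀ lam : ℝ, 1 ≤ lam → lam • K ⊆ K

/-- A pointed closed convex cone with nonempty interior. -/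
def IsPointedSolidClosedCone {n : ℕ} (C : Set (EuclideanSpace ℝ (Fin n))) : Prop :=
  IsClosed C ∧ Convex ℝ C ∧ (∀ lam : ℝ, 0 ≤ lam → lam • C ⊆ C) ∧
    (interior C).Nonempty ∧ C ∩ (-C) = {0}

/-- A `C`-pseudo-cone: a pseudo-cone whose recession cone is `C`, where `C` is a
pointed closed convex cone with nonempty interior. -/
def IsCPseudoCone {n : ℕ} (C K : Set (EuclideanSpace ℝ (Fin n))) : Prop :=
  IsPointedSolidClosedCone C ∧ IsPseudoCone K ∧ recessionCone K = C

private lemma subset_recession {n : ℕ} {K : Set (EuclideanSpace ℝ (Fin n))}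
    (hcl : IsClosed K) (hconv : Convex ℝ K)
    (hscale : ∀ lam : ℝ, 1 ≤ lam → lam • K ⊆ K) : K ⊆ recessionCone K := by
  intro x hx y hy t ht
  rcases eq_or_lt_of_le ht with rfl | ht'
  · simpa using hy
  · -- sequence approach
    set μ : ℕ → ℝ := fun k => t / (t + k + 1) with hμdef
    have hden : ∀ k : ℕ, 0 < t + (k : ℝ) + 1 := fun k => by positivity
    have hμ0 : ∀ k, 0 ≤ μ k := fun k => div_nonneg ht (hden k).le
    have hμ1 : ∀ k, μ k ≤ 1 := fun k => by
      rw [div_le_one (hden k)]; nlinarith [(show (0:ℝ) ≤ (k:ℝ) from Nat.cast_nonneg k)]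
    have hmem : ∀ k : ℕ, (1 - μ k) • y + t • x ∈ K := by
      intro k
      have hlam : (1 : ℝ) ≤ t + k + 1 := by nlinarith [(show (0:ℝ) ≤ (k:ℝ) from Nat.cast_nonneg k)]
      have hx' : (t + (k : ℝ) + 1) • x ∈ K := hscale _ hlam ⟨x, hx, rfl⟩
      have heq : μ k • ((t + (k : ℝ) + 1) • x) = t • x := by
        rw [smul_smul]
        congr 1
        exact div_mul_cancel₀ t (hden k).ne'
      have := hconv (a := 1 - μ k) (b := μ k) hy hx'
        (by linarith [hμ1 k]) (hμ0 k) (by ring)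
      rwa [heq] at this
    have htend : Tendsto μ atTop (𝓝 0) := by
      have h1 : Tendsto (fun k : ℕ => t + (k : ℝ) + 1) atTop atTop := by
        apply tendsto_atTop_add_const_right
        apply tendsto_atTop_add_const_left
        exact tendsto_natCast_atTop_atTop
      exact Tendsto.div_atTop tendsto_const_nhds h1
    have htend2 : Tendsto (fun k => (1 - μ k) • y + t • x) atTop (𝓝 (y + t • x)) := by
      have : Tendsto (fun k => (1 - μ k)) atTop (𝓝 (1 : ℝ)) := by
        simpa using (tendsto_const_nhds (x := (1:ℝ))).sub htend
      have := (this.smul_const y).add (tendsto_const_nhds (x := t • x))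
      simpa using this
    exact hcl.mem_of_tendsto htend2 (Eventually.of_forall hmem)

/-- For a `C`-pseudo-cone `K`, the support function `h_K` is non-positive
on `C°` and strictly negative on `int C°`. -/
theorem supportFn_nonpos_on_dualCone_and_neg_on_interior {n : ℕ}
    (C K : Set (EuclideanSpace ℝ (Fin n))) (hK : IsCPseudoCone C K) :
    (∀ u ∈ dualCone C, supportFn K u ≤ (0 : EReal)) ∧
      (∀ u ∈ interior (dualCone C), supportFn K u < (0 : EReal)) := by
  obtain ⟨hC, ⟨hne, hcl, hconv, h0, hscale⟩, hrec⟩ := hK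
  have hKC : K ⊆ C := hrec ▸ subset_recession hcl hconv hscale
  constructor
  · intro u hu
    apply sSup_le
    rintro a ⟨x, hx, rfl⟩
    simp only [EReal.coe_nonpos]
    exact hu x (hKC hx)
  · intro u hu
    obtain ⟨ε, hε, hball⟩ := Metric.mem_nhds_iff.mp (mem_interior_iff_mem_nhds.mp hu)
    obtain ⟨r, hr, hrK⟩ : ∃ r > 0, Metric.ball (0 : EuclideanSpace ℝ (Fin n)) r ⊆ Kᶜ :=
      Metric.mem_nhds_iff.mp (hcl.isOpen_compl.mem_nhds h0)
    have hbound : ∀ x ∈ K, ⟪u, x⟫ ≤ -(ε / 2 * r) := by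
      intro x hx
      have hxC : x ∈ C := hKC hx
      have hxr : r ≤ ‖x‖ := by
        by_contra h
        exact hrK (mem_ball_zero_iff.mpr (lt_of_not_ge h)) hx
      have hxpos : 0 < ‖x‖ := lt_of_lt_of_le hr hxr
      set c : ℝ := ε / 2 / ‖x‖ with hc
      have hcpos : 0 < c := by positivity
      have hv : u + c • x ∈ dualCone C := by
        apply hball
        have : dist (u + c • x) u = ε / 2 := by
          rw [dist_eq_norm]
          simp [norm_smul, abs_of_pos hcpos, abs_of_pos hε, hc, div_mul_cancel₀ _ hxpos.ne']
        simp [Metric.mem_ball, this, hε]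
      have h2 := hv x hxC
      rw [inner_add_left, real_inner_smul_left, real_inner_self_eq_norm_sq] at h2
      have hcn : c * ‖x‖ ^ 2 = ε / 2 * ‖x‖ := by
        rw [hc]; field_simp
      nlinarith
    have hle : supportFn K u ≤ ((-(ε / 2 * r) : ℝ) : EReal) := by
      apply sSup_le
      rintro a ⟨x, hx, rfl⟩
      simp only [EReal.coe_le_coe_iff]
      exact hbound x hx
    refine lt_of_le_of_lt hle ?_
    exact_mod_cast (by nlinarith : -(ε / 2 * r) < (0 : ℝ))
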